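/- Let k ≥ 2 be an integer and write v_{0,1} = v_{0,0+1} and v_{0,2} = v_{0,0+2}. Then v_{0,1} and v_{0,2} are continuously differentiable on ℝ² and satisfy: (i) v_{0,1}(x) = v_{0,2}(x) = 0 for every x ∈ ∂T (the union of the three edges of T); (ii) the total derivative of v_{0,1} and of v_{0,2} vanishes at each vertex v0, v1, v2; (iii) for every x in the closed edge e1, the derivative of v_{0,1} at x in the direction n1 equals −(8|T|²/9) c_{1,1} λ0(x)^k λ2(x), while the derivative of v_{0,1} in direction n0 vanishes at every x ∈ e0 and its derivative in direction n2 vanishes at every x ∈ e2; (iv) for every x in the closed edge e2, the derivative of v_{0,2} at x in the direction n2 equals (8|T|²/9) c_{2,2} λ0(x)^k λ1(x), while the derivative of v_{0,2} in direction n0 vanishes at every x ∈ e0 and its derivative in direction n1 vanishes at every x ∈ e1. -/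

import Mathlib

set_option maxHeartbeats 1000000


noncomputable section

open Matrix MeasureTheory

abbrev Vec2 : Type := Fin 2 → ℝ

/-- Euclidean dot product on `ℝ²`. -/
def dot2 (a b : Vec2) : ℝ := a 0 * b 0 + a 1 * b 1

/-- Partial derivative of `f` in the `i`-th coordinate direction. -/
def pd (i : Fin 2) (f : Vec2 → ℝ) (x : Vec2) : ℝ := fderiv ℝ f x (Pi.single i 1)

/-- The matrix `a bᵀ`. -/
def outer (a b : Vec2) : Matrix (Fin 2) (Fin 2) ℝ := fun i j => a i * b j

/-- `sym(a ⊗ b) = (a bᵀ + b aᵀ)/2`. -/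
def symOuter (a b : Vec2) : Matrix (Fin 2) (Fin 2) ℝ := (1 / 2 : ℝ) • (outer a b + outer b a)

/-- The Airy operator (rotated Hessian)
`J(f) = [[∂²f/∂x₂², −∂²f/∂x₁∂x₂], [−∂²f/∂x₁∂x₂, ∂²f/∂x₁²]]`. -/
def airy (f : Vec2 → ℝ) (x : Vec2) : Matrix (Fin 2) (Fin 2) ℝ :=
  !![pd 1 (pd 1 f) x, -(pd 0 (pd 1 f) x); -(pd 0 (pd 1 f) x), pd 0 (pd 0 f) x]

/-- `f` is the evaluation function of a real polynomial in two variables of total degree ≤ m. -/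
def IsPolyDeg (m : ℕ) (f : Vec2 → ℝ) : Prop :=
  ∃ P : MvPolynomial (Fin 2) ℝ, P.totalDegree ≤ m ∧ ∀ x, f x = MvPolynomial.eval x P

/-- `f` is the evaluation function of a real polynomial in two variables. -/
def IsPolyFun (f : Vec2 → ℝ) : Prop :=
  ∃ P : MvPolynomial (Fin 2) ℝ, ∀ x, f x = MvPolynomial.eval x P

/-- `λᵢᴿ = λᵢ − min(λ₀, λ₁, λ₂)`: hat function of vertex `vᵢ` on the barycentric refinement. -/
def lamR (lam : Fin 3 → Vec2 → ℝ) (i : Fin 3) (x : Vec2) : ℝ :=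
  lam i x - min (lam 0 x) (min (lam 1 x) (lam 2 x))

/-- `x ∈ Ωⱼ`: the region where `λⱼ` is the strict minimum of the barycentric coordinates. -/
def inReg (lam : Fin 3 → Vec2 → ℝ) (j : Fin 3) (x : Vec2) : Prop :=
  ∀ i : Fin 3, i ≠ j → lam j x < lam i x

/-- The branch formula of `ψᵢ` on `Ω_{i+2}`. -/
def psiA (lam : Fin 3 → Vec2 → ℝ) (tc : Fin 3 → Vec2) (k : ℕ) (i : Fin 3) (x : Vec2) :
    Matrix (Fin 2) (Fin 2) ℝ :=
  (2 * (lam i x - lam (i + 2) x) ^ k) • symOuter (tc i) (tc (i + 1)) -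
    ((k : ℝ) * (lam i x - lam (i + 2) x) ^ (k - 1) * (lam (i + 1) x - lam (i + 2) x)) •
      outer (tc (i + 1)) (tc (i + 1))

/-- The branch formula of `ψᵢ` on `Ω_{i+1}`. -/
def psiB (lam : Fin 3 → Vec2 → ℝ) (tc : Fin 3 → Vec2) (k : ℕ) (i : Fin 3) (x : Vec2) :
    Matrix (Fin 2) (Fin 2) ℝ :=
  -((2 * (lam i x - lam (i + 1) x) ^ k) • symOuter (tc i) (tc (i + 2))) +
    ((k : ℝ) * (lam i x - lam (i + 1) x) ^ (k - 1) * (lam (i + 2) x - lam (i + 1) x)) •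
      outer (tc (i + 2)) (tc (i + 2))

open Classical in
/-- The piecewise enrichment stress `ψᵢ`. -/
def psiFun (lam : Fin 3 → Vec2 → ℝ) (tc : Fin 3 → Vec2) (k : ℕ) (i : Fin 3) (x : Vec2) :
    Matrix (Fin 2) (Fin 2) ℝ :=
  if inReg lam (i + 2) x then psiA lam tc k i x
  else if inReg lam (i + 1) x then psiB lam tc k i x
  else 0

/-- The `Ωⱼ`-branch polynomial formula of `ψᵢ` (value used on the closed edge `eⱼ`). -/
def psiEdge (lam : Fin 3 → Vec2 → ℝ) (tc : Fin 3 → Vec2) (k : ℕ) (i j : Fin 3) (x : Vec2) :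
    Matrix (Fin 2) (Fin 2) ℝ :=
  if j = i + 2 then psiA lam tc k i x
  else if j = i + 1 then psiB lam tc k i x
  else 0

/-- The Airy potential `vᵢ = (4|T|²/(9(k+1))) (λᵢᴿ)^{k+1} (λ_{i+2} − λ_{i+1})`. -/
def vEnrich (lam : Fin 3 → Vec2 → ℝ) (area : ℝ) (k : ℕ) (i : Fin 3) (x : Vec2) : ℝ :=
  4 * area ^ 2 / (9 * (k + 1)) * (lamR lam i x) ^ (k + 1) * (lam (i + 2) x - lam (i + 1) x)

/-- `v_{i,i+1} = (C_T/(k+1))[(λᵢᴿ)^{k+1} − λᵢ^{k+1}](λ_{i+2} − λ_{i+1}) − C_T λᵢ^k λ_{i+1} λ_{i+2}`. -/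
def vE1 (lam : Fin 3 → Vec2 → ℝ) (area : ℝ) (k : ℕ) (i : Fin 3) (x : Vec2) : ℝ :=
  4 * area ^ 2 / 9 / (k + 1) * ((lamR lam i x) ^ (k + 1) - (lam i x) ^ (k + 1)) *
      (lam (i + 2) x - lam (i + 1) x) -
    4 * area ^ 2 / 9 * (lam i x) ^ k * lam (i + 1) x * lam (i + 2) x

/-- `v_{i,i+2} = (C_T/(k+1))[(λᵢᴿ)^{k+1} − λᵢ^{k+1}](λ_{i+2} − λ_{i+1}) + C_T λᵢ^k λ_{i+1} λ_{i+2}`. -/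
def vE2 (lam : Fin 3 → Vec2 → ℝ) (area : ℝ) (k : ℕ) (i : Fin 3) (x : Vec2) : ℝ :=
  4 * area ^ 2 / 9 / (k + 1) * ((lamR lam i x) ^ (k + 1) - (lam i x) ^ (k + 1)) *
      (lam (i + 2) x - lam (i + 1) x) +
    4 * area ^ 2 / 9 * (lam i x) ^ k * lam (i + 1) x * lam (i + 2) x

/-- `wᵢ = (1/(4 C_T c_{i,i})) (v_{i+1,i} − v_{i+2,i})`, with `k = 1`. -/
def wFun (lam : Fin 3 → Vec2 → ℝ) (g : Fin 3 → Vec2) (n : Fin 3 → Vec2) (area : ℝ)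
    (i : Fin 3) (x : Vec2) : ℝ :=
  1 / (4 * (4 * area ^ 2 / 9) * dot2 (g i) (n i)) *
    (vE2 lam area 1 (i + 1) x - vE1 lam area 1 (i + 2) x)

/-- `sᵢ = λ_{i+1} λ_{i+2} (λ_{i+1} − λ_{i+2})`. -/
def sFun (lam : Fin 3 → Vec2 → ℝ) (i : Fin 3) (x : Vec2) : ℝ :=
  lam (i + 1) x * lam (i + 2) x * (lam (i + 1) x - lam (i + 2) x)

/-- `uᵢ = sᵢ − 3(c_{i+1,i} − c_{i+2,i}) wᵢ − c_{i+1,i+1} w_{i+1} + c_{i+2,i+2} w_{i+2}`. -/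
def uFun (lam : Fin 3 → Vec2 → ℝ) (g : Fin 3 → Vec2) (n : Fin 3 → Vec2) (area : ℝ)
    (i : Fin 3) (x : Vec2) : ℝ :=
  sFun lam i x - 3 * (dot2 (g (i + 1)) (n i) - dot2 (g (i + 2)) (n i)) * wFun lam g n area i x -
    dot2 (g (i + 1)) (n (i + 1)) * wFun lam g n area (i + 1) x +
    dot2 (g (i + 2)) (n (i + 2)) * wFun lam g n area (i + 2) x

/-- The closed triangle `T = conv{v₀, v₁, v₂}`. -/
def Tset (v : Fin 3 → Vec2) : Set Vec2 := convexHull ℝ {v 0, v 1, v 2}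

/-- The closed edge `eⱼ` of `T` opposite the vertex `vⱼ`. -/
def edgeSeg (v : Fin 3 → Vec2) (j : Fin 3) : Set Vec2 := segment ℝ (v (j + 1)) (v (j + 2))

/-- `det(v₁ − v₀, v₂ − v₀)`. -/
def detT (v : Fin 3 → Vec2) : ℝ :=
  (v 1 0 - v 0 0) * (v 2 1 - v 0 1) - (v 1 1 - v 0 1) * (v 2 0 - v 0 0)

namespace EdgeAux

def Lmap (a : Vec2) : Vec2 →L[ℝ] ℝ :=
  a 0 • (ContinuousLinearMap.proj 0 : Vec2 →L[ℝ] ℝ)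
    + a 1 • (ContinuousLinearMap.proj 1 : Vec2 →L[ℝ] ℝ)

@[simp] lemma Lmap_apply (a x : Vec2) : Lmap a x = dot2 a x := by
  simp [Lmap, dot2]

section

variable (lam : Fin 3 → Vec2 → ℝ) (g : Fin 3 → Vec2) (cst : Fin 3 → ℝ) (k : ℕ)

lemma hasFDerivAt_lam (hlam : ∀ i x, lam i x = dot2 (g i) x + cst i) (i : Fin 3) (x : Vec2) :
    HasFDerivAt (lam i) (Lmap (g i)) x := by
  have h : lam i = fun y => Lmap (g i) y + cst i := funext fun y => by rw [hlam]; simp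
  rw [h]
  exact (Lmap (g i)).hasFDerivAt.add_const _

lemma continuous_lam (hlam : ∀ i x, lam i x = dot2 (g i) x + cst i) (i : Fin 3) :
    Continuous (lam i) := by
  have h : lam i = fun y => Lmap (g i) y + cst i := funext fun y => by rw [hlam]; simp
  rw [h]
  exact (Lmap (g i)).continuous.add continuous_const

def Kg : ℝ := (|g 0 0| + |g 0 1|) + (|g 1 0| + |g 1 1|) + (|g 2 0| + |g 2 1|)

lemma Kg_nonneg : 0 ≤ Kg g := by unfold Kg; positivity

lemma lam_lip (hlam : ∀ i x, lam i x = dot2 (g i) x + cst i) (i : Fin 3) (x y : Vec2) :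
    |lam i x - lam i y| ≤ Kg g * ‖x - y‖ := by
  have h0 : |(x - y) 0| ≤ ‖x - y‖ := by
    simpa [Real.norm_eq_abs] using norm_le_pi_norm (x - y) 0
  have h1 : |(x - y) 1| ≤ ‖x - y‖ := by
    simpa [Real.norm_eq_abs] using norm_le_pi_norm (x - y) 1
  have hx0 : (x - y) 0 = x 0 - y 0 := rfl
  have hx1 : (x - y) 1 = x 1 - y 1 := rfl
  have heq : lam i x - lam i y = g i 0 * (x 0 - y 0) + g i 1 * (x 1 - y 1) := by
    rw [hlam, hlam]; unfold dot2; ring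
  rw [heq]
  have hKi : |g i 0| + |g i 1| ≤ Kg g := by
    unfold Kg
    fin_cases i <;> simp <;>
      [linarith [abs_nonneg (g 1 0), abs_nonneg (g 1 1), abs_nonneg (g 2 0), abs_nonneg (g 2 1)];
       linarith [abs_nonneg (g 0 0), abs_nonneg (g 0 1), abs_nonneg (g 2 0), abs_nonneg (g 2 1)];
       linarith [abs_nonneg (g 0 0), abs_nonneg (g 0 1), abs_nonneg (g 1 0), abs_nonneg (g 1 1)]]
  calc |g i 0 * (x 0 - y 0) + g i 1 * (x 1 - y 1)|
      ≤ |g i 0 * (x 0 - y 0)| + |g i 1 * (x 1 - y 1)| := abs_add_le _ _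
    _ = |g i 0| * |x 0 - y 0| + |g i 1| * |x 1 - y 1| := by rw [abs_mul, abs_mul]
    _ ≤ |g i 0| * ‖x - y‖ + |g i 1| * ‖x - y‖ := by
        rw [hx0] at h0; rw [hx1] at h1
        gcongr <;> exact abs_nonneg _
    _ = (|g i 0| + |g i 1|) * ‖x - y‖ := by ring
    _ ≤ Kg g * ‖x - y‖ := by
        have := norm_nonneg (x - y); nlinarith


lemma lamR_nonneg (x : Vec2) : 0 ≤ lamR lam 0 x := by
  unfold lamR
  have := min_le_left (lam 0 x) (min (lam 1 x) (lam 2 x))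
  linarith

lemma lamR_eq_max (x : Vec2) :
    lamR lam 0 x = max 0 (max (lam 0 x - lam 1 x) (lam 0 x - lam 2 x)) := by
  unfold lamR
  rcases le_total (lam 1 x) (lam 2 x) with h | h <;>
    rcases le_total (lam 0 x) (lam 1 x) with h1 | h1 <;>
      rcases le_total (lam 0 x) (lam 2 x) with h2 | h2 <;>
        simp [min_def, max_def] <;> split_ifs <;> linarith

lemma max3_lip_aux (p q p' q' : ℝ) :
    max 0 (max p q) ≤ max 0 (max p' q') + (|p - p'| + |q - q'|) := by
  have hE : (0:ℝ) ≤ |p - p'| + |q - q'| := by positivity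
  apply max_le (by linarith [le_max_left (0:ℝ) (max p' q')])
  apply max_le
  · have hp : p - p' ≤ |p - p'| := le_abs_self _
    have : p' ≤ max 0 (max p' q') := le_trans (le_max_left p' q') (le_max_right 0 _)
    linarith [abs_nonneg (q - q')]
  · have hq : q - q' ≤ |q - q'| := le_abs_self _
    have : q' ≤ max 0 (max p' q') := le_trans (le_max_right p' q') (le_max_right 0 _)
    linarith [abs_nonneg (p - p')]

lemma max3_lip (p q p' q' : ℝ) :
    |max 0 (max p q) - max 0 (max p' q')| ≤ |p - p'| + |q - q'| := by
  rw [abs_sub_le_iff]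
  constructor
  · linarith [max3_lip_aux p q p' q']
  · have := max3_lip_aux p' q' p q
    rw [abs_sub_comm p' p, abs_sub_comm q' q] at this
    linarith

lemma lamR_lip (hlam : ∀ i x, lam i x = dot2 (g i) x + cst i) (x y : Vec2) :
    |lamR lam 0 x - lamR lam 0 y| ≤ 4 * Kg g * ‖x - y‖ := by
  rw [lamR_eq_max, lamR_eq_max]
  have h := max3_lip (lam 0 x - lam 1 x) (lam 0 x - lam 2 x)
    (lam 0 y - lam 1 y) (lam 0 y - lam 2 y)
  have e1 : |lam 0 x - lam 1 x - (lam 0 y - lam 1 y)|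
      ≤ |lam 0 x - lam 0 y| + |lam 1 x - lam 1 y| := by
    have := abs_sub (lam 0 x - lam 0 y) (lam 1 x - lam 1 y)
    calc |lam 0 x - lam 1 x - (lam 0 y - lam 1 y)|
        = |(lam 0 x - lam 0 y) - (lam 1 x - lam 1 y)| := by ring_nf
      _ ≤ |lam 0 x - lam 0 y| + |lam 1 x - lam 1 y| := abs_sub _ _
  have e2 : |lam 0 x - lam 2 x - (lam 0 y - lam 2 y)|
      ≤ |lam 0 x - lam 0 y| + |lam 2 x - lam 2 y| := by
    calc |lam 0 x - lam 2 x - (lam 0 y - lam 2 y)|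
        = |(lam 0 x - lam 0 y) - (lam 2 x - lam 2 y)| := by ring_nf
      _ ≤ |lam 0 x - lam 0 y| + |lam 2 x - lam 2 y| := abs_sub _ _
  have l0 := lam_lip lam g cst hlam 0 x y
  have l1 := lam_lip lam g cst hlam 1 x y
  have l2 := lam_lip lam g cst hlam 2 x y
  linarith


lemma lamR_eq_sub1 (x : Vec2) (h1 : lam 1 x ≤ lam 0 x) (h2 : lam 1 x ≤ lam 2 x) :
    lamR lam 0 x = lam 0 x - lam 1 x := by
  unfold lamR
  rw [min_eq_left h2, min_eq_right h1]

lemma lamR_eq_sub2 (x : Vec2) (h1 : lam 2 x ≤ lam 0 x) (h2 : lam 2 x ≤ lam 1 x) :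
    lamR lam 0 x = lam 0 x - lam 2 x := by
  unfold lamR
  rw [min_eq_right h2, min_eq_right h1]

end

lemma abs_pow_sub_pow (M : ℝ) (n : ℕ) :
    ∀ a b : ℝ, |a| ≤ M → |b| ≤ M → |a ^ n - b ^ n| ≤ n * M ^ (n - 1) * |a - b| := by
  induction n with
  | zero => intro a b _ _; simp
  | succ n ih =>
    intro a b ha hb
    have hM : 0 ≤ M := le_trans (abs_nonneg a) ha
    have key : a ^ (n + 1) - b ^ (n + 1) = a ^ n * (a - b) + (a ^ n - b ^ n) * b := by ring
    have h1 : |a ^ n * (a - b)| ≤ M ^ n * |a - b| := by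
      rw [abs_mul, abs_pow]
      gcongr
    have h2 : |(a ^ n - b ^ n) * b| ≤ (n * M ^ (n - 1) * |a - b|) * M := by
      rw [abs_mul]
      have := ih a b ha hb
      have habs : (0:ℝ) ≤ |a - b| := abs_nonneg _
      nlinarith [abs_nonneg (a ^ n - b ^ n), abs_nonneg b,
        mul_le_mul this hb (abs_nonneg b) (by positivity)]
    calc |a ^ (n + 1) - b ^ (n + 1)| ≤ |a ^ n * (a - b)| + |(a ^ n - b ^ n) * b| := by
          rw [key]; exact abs_add_le _ _
      _ ≤ M ^ n * |a - b| + (n * M ^ (n - 1) * |a - b|) * M := by linarith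
      _ ≤ (↑(n + 1) : ℝ) * M ^ ((n + 1) - 1) * |a - b| := by
          simp only [Nat.add_sub_cancel]
          push_cast
          rcases Nat.eq_zero_or_pos n with hn | hn
          · subst hn; simp
          · have hpow : M ^ (n - 1) * M = M ^ n := by
              rw [← pow_succ]
              congr 1
              omega
            have he : (n : ℝ) * M ^ (n - 1) * |a - b| * M = n * M ^ n * |a - b| := by
              calc (n : ℝ) * M ^ (n - 1) * |a - b| * M
                  = (n : ℝ) * (M ^ (n - 1) * M) * |a - b| := by ring
                _ = n * M ^ n * |a - b| := by rw [hpow]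
            linarith

lemma hasFDerivAt_of_le_sq (f : Vec2 → ℝ) (f' : Vec2 →L[ℝ] ℝ) (x₀ : Vec2) (C : ℝ) (hC : 0 ≤ C)
    (h : ∀ y : Vec2, ‖y‖ ≤ 1 → |f (x₀ + y) - f x₀ - f' y| ≤ C * ‖y‖ ^ 2) :
    HasFDerivAt f f' x₀ := by
  rw [hasFDerivAt_iff_isLittleO_nhds_zero, Asymptotics.isLittleO_iff]
  intro c hc
  rw [Metric.eventually_nhds_iff]
  refine ⟨min 1 (c / (C + 1)), by positivity, fun y hy => ?_⟩
  have hy' : ‖y‖ < min 1 (c / (C + 1)) := by simpa [dist_zero_right] using hy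
  have h1 : ‖y‖ ≤ 1 := le_of_lt (lt_of_lt_of_le hy' (min_le_left _ _))
  have h2 : ‖y‖ ≤ c / (C + 1) := le_of_lt (lt_of_lt_of_le hy' (min_le_right _ _))
  have hb := h y h1
  have hn : (0:ℝ) ≤ ‖y‖ := norm_nonneg y
  have key : C * ‖y‖ ^ 2 ≤ c * ‖y‖ := by
    have hCy : C * ‖y‖ ≤ C * (c / (C + 1)) := by gcongr
    have hcc : C * (c / (C + 1)) ≤ c := by
      have hd : C / (C + 1) ≤ 1 := (div_le_one (by linarith)).mpr (by linarith)
      calc C * (c / (C + 1)) = (C / (C + 1)) * c := by ring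
        _ ≤ 1 * c := mul_le_mul_of_nonneg_right hd hc.le
        _ = c := one_mul c
    nlinarith
  calc ‖f (x₀ + y) - f x₀ - f' y‖ = |f (x₀ + y) - f x₀ - f' y| := rfl
    _ ≤ C * ‖y‖ ^ 2 := hb
    _ ≤ c * ‖y‖ := key

lemma hasFDerivAt_pow_succ (f : Vec2 → ℝ) (f' : Vec2 →L[ℝ] ℝ) (x : Vec2)
    (h : HasFDerivAt f f' x) (n : ℕ) :
    HasFDerivAt (fun y => f y ^ (n + 1)) ((((n : ℝ) + 1) * f x ^ n) • f') x := by
  induction n with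
  | zero => simpa using h
  | succ n ih =>
    have hm := ih.mul h
    have : (fun y => f y ^ (n + 1) * f y) = fun y => f y ^ (n + 1 + 1) := by
      funext y; rw [← pow_succ]
    change HasFDerivAt (fun y => f y ^ (n + 1) * f y) _ x at hm; rw [this] at hm
    refine HasFDerivAt.congr_fderiv hm ?_
    ext y
    simp only [ContinuousLinearMap.add_apply, ContinuousLinearMap.smul_apply, smul_eq_mul]
    push_cast
    ring

section

variable (lam : Fin 3 → Vec2 → ℝ) (g : Fin 3 → Vec2) (cst : Fin 3 → ℝ) (k : ℕ)

def LminSel (x : Vec2) : Vec2 →L[ℝ] ℝ :=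
  if lam 1 x ≤ lam 0 x ∧ lam 1 x ≤ lam 2 x then Lmap (g 1)
  else if lam 2 x ≤ lam 0 x ∧ lam 2 x ≤ lam 1 x then Lmap (g 2)
  else Lmap (g 0)

def cfun (x : Vec2) : ℝ := ((k : ℝ) + 1) * lamR lam 0 x ^ k * (lam 2 x - lam 1 x)

def Dfun (x : Vec2) : Vec2 →L[ℝ] ℝ :=
  cfun lam k x • (Lmap (g 0) - LminSel lam g x)
    + lamR lam 0 x ^ (k + 1) • (Lmap (g 2) - Lmap (g 1))

def Gfun (x : Vec2) : ℝ := lamR lam 0 x ^ (k + 1) * (lam 2 x - lam 1 x)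

def Ebr (j : Fin 3) (x : Vec2) : Vec2 →L[ℝ] ℝ :=
  (((k : ℝ) + 1) * (lam 0 x - lam j x) ^ k * (lam 2 x - lam 1 x)) • (Lmap (g 0) - Lmap (g j))
    + (lam 0 x - lam j x) ^ (k + 1) • (Lmap (g 2) - Lmap (g 1))

def Dp (x : Vec2) : Vec2 →L[ℝ] ℝ :=
  (((k : ℝ) + 1) * lam 0 x ^ k * (lam 2 x - lam 1 x)) • Lmap (g 0)
    + lam 0 x ^ (k + 1) • (Lmap (g 2) - Lmap (g 1))

def Dq (x : Vec2) : Vec2 →L[ℝ] ℝ :=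
  ((k : ℝ) * lam 0 x ^ (k - 1) * lam 1 x * lam 2 x) • Lmap (g 0)
    + (lam 0 x ^ k * lam 2 x) • Lmap (g 1) + (lam 0 x ^ k * lam 1 x) • Lmap (g 2)

variable (hlam : ∀ i x, lam i x = dot2 (g i) x + cst i)

include cst hlam

lemma hasFDerivAt_branch (j : Fin 3) (x : Vec2) :
    HasFDerivAt (fun y => (lam 0 y - lam j y) ^ (k + 1) * (lam 2 y - lam 1 y))
      (Ebr lam g k j x) x := by
  have h0 := hasFDerivAt_lam lam g cst hlam 0 x
  have hj := hasFDerivAt_lam lam g cst hlam j x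
  have h1 := hasFDerivAt_lam lam g cst hlam 1 x
  have h2 := hasFDerivAt_lam lam g cst hlam 2 x
  have hu := hasFDerivAt_pow_succ _ _ x (h0.sub hj) k
  have hm := hu.mul (h2.sub h1)
  refine HasFDerivAt.congr_fderiv hm ?_
  ext y
  simp only [Ebr, ContinuousLinearMap.add_apply, ContinuousLinearMap.smul_apply,
    ContinuousLinearMap.sub_apply, smul_eq_mul, Pi.sub_apply]
  ring

lemma hasFDerivAt_p (x : Vec2) :
    HasFDerivAt (fun y => lam 0 y ^ (k + 1) * (lam 2 y - lam 1 y)) (Dp lam g k x) x := by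
  have h0 := hasFDerivAt_lam lam g cst hlam 0 x
  have h1 := hasFDerivAt_lam lam g cst hlam 1 x
  have h2 := hasFDerivAt_lam lam g cst hlam 2 x
  have hu := hasFDerivAt_pow_succ _ _ x h0 k
  have hm := hu.mul (h2.sub h1)
  refine HasFDerivAt.congr_fderiv hm ?_
  ext y
  simp only [Dp, ContinuousLinearMap.add_apply, ContinuousLinearMap.smul_apply,
    ContinuousLinearMap.sub_apply, smul_eq_mul, Pi.sub_apply]
  ring

lemma hasFDerivAt_q (hk : 1 ≤ k) (x : Vec2) :
    HasFDerivAt (fun y => lam 0 y ^ k * lam 1 y * lam 2 y) (Dq lam g k x) x := by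
  have h0 := hasFDerivAt_lam lam g cst hlam 0 x
  have h1 := hasFDerivAt_lam lam g cst hlam 1 x
  have h2 := hasFDerivAt_lam lam g cst hlam 2 x
  have hu := hasFDerivAt_pow_succ _ _ x h0 (k - 1)
  have hke : k - 1 + 1 = k := by omega
  rw [hke] at hu
  have hm := (hu.mul h1).mul h2
  refine HasFDerivAt.congr_fderiv hm ?_
  ext y
  simp only [Dq, ContinuousLinearMap.add_apply, ContinuousLinearMap.smul_apply,
    ContinuousLinearMap.sub_apply, smul_eq_mul, Pi.mul_apply]
  have hc : ((k - 1 : ℕ) : ℝ) + 1 = (k : ℝ) := by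
    rw [Nat.cast_sub hk]; ring
  rw [hc]
  ring


lemma lam_add (i : Fin 3) (x y : Vec2) : lam i (x + y) = lam i x + dot2 (g i) y := by
  rw [hlam, hlam]
  have h0 : (x + y) 0 = x 0 + y 0 := rfl
  have h1 : (x + y) 1 = x 1 + y 1 := rfl
  unfold dot2
  rw [h0, h1]; ring

lemma hasFDerivAt_G (hk : 2 ≤ k) (x₀ : Vec2) :
    HasFDerivAt (Gfun lam k) (Dfun lam g k x₀) x₀ := by
  have hk0 : k ≠ 0 := by omega
  have hKg := Kg_nonneg g
  set Kt : ℝ := 4 * Kg g with hKtdef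
  have hKt0 : (0:ℝ) ≤ Kt := by positivity
  have hRnn : ∀ x, 0 ≤ lamR lam 0 x := lamR_nonneg lam
  have hRlip : ∀ x y : Vec2, |lamR lam 0 x - lamR lam 0 y| ≤ Kt * ‖x - y‖ :=
    fun x y => lamR_lip lam g cst hlam x y
  have hRy' : ∀ (x₀ y : Vec2), |lamR lam 0 (x₀ + y) - lamR lam 0 x₀| ≤ Kt * ‖y‖ := by
    intro x₀ y
    have h := hRlip (x₀ + y) x₀
    simpa [add_sub_cancel_left] using h
  have hlamy : ∀ (i : Fin 3) (x₀ y : Vec2), |lam i (x₀ + y) - lam i x₀| ≤ Kg g * ‖y‖ := by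
    intro i x₀ y
    have h := lam_lip lam g cst hlam i (x₀ + y) x₀
    simpa [add_sub_cancel_left] using h
  by_cases hR0 : lamR lam 0 x₀ = 0
  · have hD : Dfun lam g k x₀ = 0 := by
      simp [Dfun, cfun, hR0, zero_pow hk0]
    rw [hD]
    apply hasFDerivAt_of_le_sq _ _ _ (Kt ^ (k + 1) * (|lam 2 x₀ - lam 1 x₀| + Kt))
      (by positivity)
    intro y hy
    have hG0 : Gfun lam k x₀ = 0 := by simp [Gfun, hR0, zero_pow]
    have hRy : lamR lam 0 (x₀ + y) ≤ Kt * ‖y‖ := by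
      have h := hRy' x₀ y
      rw [hR0, sub_zero, abs_of_nonneg (hRnn _)] at h
      exact h
    have hwy : |lam 2 (x₀ + y) - lam 1 (x₀ + y)| ≤ |lam 2 x₀ - lam 1 x₀| + Kt := by
      have t1 := hlamy 1 x₀ y
      have t2 := hlamy 2 x₀ y
      have e : lam 2 (x₀ + y) - lam 1 (x₀ + y)
          = (lam 2 x₀ - lam 1 x₀)
            + ((lam 2 (x₀ + y) - lam 2 x₀) - (lam 1 (x₀ + y) - lam 1 x₀)) := by ring
      rw [e]
      refine le_trans (abs_add_le _ _) ?_
      have h3 := abs_sub (lam 2 (x₀ + y) - lam 2 x₀) (lam 1 (x₀ + y) - lam 1 x₀)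
      have hKgy : Kg g * ‖y‖ ≤ Kg g := mul_le_of_le_one_right hKg hy
      rw [hKtdef]
      linarith
    have key : |Gfun lam k (x₀ + y)| ≤ Kt ^ (k + 1) * (|lam 2 x₀ - lam 1 x₀| + Kt) * ‖y‖ ^ 2 := by
      have habs : |Gfun lam k (x₀ + y)|
          = lamR lam 0 (x₀ + y) ^ (k + 1) * |lam 2 (x₀ + y) - lam 1 (x₀ + y)| := by
        rw [Gfun, abs_mul, abs_pow, abs_of_nonneg (hRnn _)]
      rw [habs]
      calc lamR lam 0 (x₀ + y) ^ (k + 1) * |lam 2 (x₀ + y) - lam 1 (x₀ + y)|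
          ≤ (Kt * ‖y‖) ^ (k + 1) * (|lam 2 x₀ - lam 1 x₀| + Kt) := by
            gcongr
            exact hRnn _
        _ = Kt ^ (k + 1) * (|lam 2 x₀ - lam 1 x₀| + Kt) * ‖y‖ ^ (k + 1) := by
            rw [mul_pow]; ring
        _ ≤ Kt ^ (k + 1) * (|lam 2 x₀ - lam 1 x₀| + Kt) * ‖y‖ ^ 2 := by
            have hpp : ‖y‖ ^ (k + 1) ≤ ‖y‖ ^ 2 :=
              pow_le_pow_of_le_one (norm_nonneg y) hy (by omega)
            have hnn : (0:ℝ) ≤ Kt ^ (k + 1) * (|lam 2 x₀ - lam 1 x₀| + Kt) := by positivity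
            exact mul_le_mul_of_nonneg_left hpp hnn
    simpa [hG0] using key
  · by_cases hw : lam 2 x₀ - lam 1 x₀ = 0
    · -- tie between lam 1 and lam 2
      have hD : Dfun lam g k x₀
          = lamR lam 0 x₀ ^ (k + 1) • (Lmap (g 2) - Lmap (g 1)) := by
        simp [Dfun, cfun, hw]
      rw [hD]
      set M : ℝ := lamR lam 0 x₀ + Kt with hMdef
      have hM0 : (0:ℝ) ≤ M := by
        have := hRnn x₀; rw [hMdef]; linarith
      have hCnn : (0:ℝ) ≤ ((k:ℝ) + 1) * M ^ k * Kt * Kt := by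
        have := pow_nonneg hM0 k
        positivity
      apply hasFDerivAt_of_le_sq _ _ _ (((k:ℝ) + 1) * M ^ k * Kt * Kt) hCnn
      intro y hy
      have hG0 : Gfun lam k x₀ = 0 := by rw [Gfun, hw, mul_zero]
      have happ : (lamR lam 0 x₀ ^ (k + 1) • (Lmap (g 2) - Lmap (g 1))) y
          = lamR lam 0 x₀ ^ (k + 1) * (lam 2 (x₀ + y) - lam 1 (x₀ + y)) := by
        have e2 := lam_add lam g cst hlam 2 x₀ y
        have e1 := lam_add lam g cst hlam 1 x₀ y
        simp only [ContinuousLinearMap.smul_apply, ContinuousLinearMap.sub_apply,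
          Lmap_apply, smul_eq_mul]
        rw [e2, e1]
        have : lam 2 x₀ = lam 1 x₀ := by linarith [sub_eq_zero.mp hw]
        rw [this]; ring
      have hrem : Gfun lam k (x₀ + y) - Gfun lam k x₀
            - (lamR lam 0 x₀ ^ (k + 1) • (Lmap (g 2) - Lmap (g 1))) y
          = (lamR lam 0 (x₀ + y) ^ (k + 1) - lamR lam 0 x₀ ^ (k + 1))
            * (lam 2 (x₀ + y) - lam 1 (x₀ + y)) := by
        rw [hG0, happ, Gfun]; ring
      rw [hrem]
      have hMy : |lamR lam 0 (x₀ + y)| ≤ M := by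
        rw [abs_of_nonneg (hRnn _), hMdef]
        have h2 := abs_le.mp (hRy' x₀ y)
        have hKty : Kt * ‖y‖ ≤ Kt := mul_le_of_le_one_right hKt0 hy
        linarith [h2.2]
      have hMx : |lamR lam 0 x₀| ≤ M := by
        rw [abs_of_nonneg (hRnn _), hMdef]; linarith
      have hpowd := abs_pow_sub_pow M (k + 1) (lamR lam 0 (x₀ + y)) (lamR lam 0 x₀) hMy hMx
      rw [Nat.add_sub_cancel] at hpowd
      have hRd : |lamR lam 0 (x₀ + y) - lamR lam 0 x₀| ≤ Kt * ‖y‖ := hRy' x₀ y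
      have hwy : |lam 2 (x₀ + y) - lam 1 (x₀ + y)| ≤ Kt * ‖y‖ := by
        have t1 := hlamy 1 x₀ y
        have t2 := hlamy 2 x₀ y
        have e : lam 2 (x₀ + y) - lam 1 (x₀ + y)
            = (lam 2 (x₀ + y) - lam 2 x₀) - (lam 1 (x₀ + y) - lam 1 x₀) + (lam 2 x₀ - lam 1 x₀) := by
          ring
        rw [e, hw, add_zero]
        have h3 := abs_sub (lam 2 (x₀ + y) - lam 2 x₀) (lam 1 (x₀ + y) - lam 1 x₀)
        have hKgy : (0:ℝ) ≤ Kg g * ‖y‖ := mul_nonneg hKg (norm_nonneg y)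
        rw [hKtdef]
        linarith
      rw [abs_mul]
      have hMpow : (0:ℝ) ≤ M ^ k := pow_nonneg hM0 k
      have h1 : |lamR lam 0 (x₀ + y) ^ (k + 1) - lamR lam 0 x₀ ^ (k + 1)|
          ≤ (↑(k + 1) : ℝ) * M ^ k * (Kt * ‖y‖) := by
        calc |lamR lam 0 (x₀ + y) ^ (k + 1) - lamR lam 0 x₀ ^ (k + 1)|
            ≤ (↑(k + 1) : ℝ) * M ^ k * |lamR lam 0 (x₀ + y) - lamR lam 0 x₀| := hpowd
          _ ≤ (↑(k + 1) : ℝ) * M ^ k * (Kt * ‖y‖) := by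
              gcongr
      have hcast : (↑(k + 1) : ℝ) = (k : ℝ) + 1 := by push_cast; ring
      rw [hcast] at h1
      calc |lamR lam 0 (x₀ + y) ^ (k + 1) - lamR lam 0 x₀ ^ (k + 1)|
            * |lam 2 (x₀ + y) - lam 1 (x₀ + y)|
          ≤ (((k:ℝ) + 1) * M ^ k * (Kt * ‖y‖)) * (Kt * ‖y‖) := by
            apply mul_le_mul h1 hwy (abs_nonneg _)
            exact mul_nonneg (mul_nonneg (by positivity) hMpow) (by positivity)
        _ = ((k:ℝ) + 1) * M ^ k * Kt * Kt * ‖y‖ ^ 2 := by ring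
    · -- unique minimum among lam 1, lam 2, strictly below lam 0
      have hRpos : 0 < lamR lam 0 x₀ := lt_of_le_of_ne (hRnn x₀) (Ne.symm hR0)
      have hminlt : min (lam 1 x₀) (lam 2 x₀) < lam 0 x₀ := by
        unfold lamR at hRpos
        rcases le_total (lam 0 x₀) (min (lam 1 x₀) (lam 2 x₀)) with h | h
        · rw [min_eq_left h] at hRpos; linarith
        · rw [min_eq_right h] at hRpos; linarith
      have h12 : lam 1 x₀ ≠ lam 2 x₀ := fun h => hw (by rw [h]; ring)
      rcases lt_or_gt_of_ne h12 with h12' | h21'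
      · have h10 : lam 1 x₀ < lam 0 x₀ := by
          rw [min_eq_left h12'.le] at hminlt; exact hminlt
        have hsel : LminSel lam g x₀ = Lmap (g 1) := by
          rw [LminSel, if_pos ⟨h10.le, h12'.le⟩]
        have hRx : lamR lam 0 x₀ = lam 0 x₀ - lam 1 x₀ :=
          lamR_eq_sub1 lam x₀ h10.le h12'.le
        have hDE : Dfun lam g k x₀ = Ebr lam g k 1 x₀ := by
          rw [Dfun, Ebr, cfun, hsel, hRx]
        rw [hDE]
        have hopen : IsOpen {x : Vec2 | lam 1 x < lam 0 x ∧ lam 1 x < lam 2 x} :=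
          IsOpen.and (isOpen_lt (continuous_lam lam g cst hlam 1) (continuous_lam lam g cst hlam 0))
            (isOpen_lt (continuous_lam lam g cst hlam 1) (continuous_lam lam g cst hlam 2))
        have hmem : {x : Vec2 | lam 1 x < lam 0 x ∧ lam 1 x < lam 2 x} ∈ nhds x₀ :=
          hopen.mem_nhds ⟨h10, h12'⟩
        refine HasFDerivAt.congr_of_eventuallyEq (hasFDerivAt_branch lam g cst k hlam 1 x₀) ?_
        filter_upwards [hmem] with x hx
        rw [Gfun, lamR_eq_sub1 lam x hx.1.le hx.2.le]
      · have h20 : lam 2 x₀ < lam 0 x₀ := by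
          rw [min_eq_right h21'.le] at hminlt; exact hminlt
        have hsel : LminSel lam g x₀ = Lmap (g 2) := by
          rw [LminSel, if_neg, if_pos ⟨h20.le, h21'.le⟩]
          rintro ⟨-, hcon⟩
          exact absurd hcon (not_le.mpr h21')
        have hRx : lamR lam 0 x₀ = lam 0 x₀ - lam 2 x₀ :=
          lamR_eq_sub2 lam x₀ h20.le h21'.le
        have hDE : Dfun lam g k x₀ = Ebr lam g k 2 x₀ := by
          rw [Dfun, Ebr, cfun, hsel, hRx]
        rw [hDE]
        have hopen : IsOpen {x : Vec2 | lam 2 x < lam 0 x ∧ lam 2 x < lam 1 x} :=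
          IsOpen.and (isOpen_lt (continuous_lam lam g cst hlam 2) (continuous_lam lam g cst hlam 0))
            (isOpen_lt (continuous_lam lam g cst hlam 2) (continuous_lam lam g cst hlam 1))
        have hmem : {x : Vec2 | lam 2 x < lam 0 x ∧ lam 2 x < lam 1 x} ∈ nhds x₀ :=
          hopen.mem_nhds ⟨h20, h21'⟩
        refine HasFDerivAt.congr_of_eventuallyEq (hasFDerivAt_branch lam g cst k hlam 2 x₀) ?_
        filter_upwards [hmem] with x hx
        rw [Gfun, lamR_eq_sub2 lam x hx.1.le hx.2.le]


lemma continuous_lamR0 : Continuous (lamR lam 0) := by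
  unfold lamR
  exact (continuous_lam lam g cst hlam 0).sub
    ((continuous_lam lam g cst hlam 0).min
      ((continuous_lam lam g cst hlam 1).min (continuous_lam lam g cst hlam 2)))

lemma continuous_cfun : Continuous (cfun lam k) := by
  unfold cfun
  exact (continuous_const.mul ((continuous_lamR0 lam g cst hlam).pow k)).mul
    ((continuous_lam lam g cst hlam 2).sub (continuous_lam lam g cst hlam 1))

lemma continuous_Dfun (hk : 2 ≤ k) : Continuous (Dfun lam g k) := by
  rw [continuous_iff_continuousAt]
  intro x₀
  have hc2 : Continuous fun x => lamR lam 0 x ^ (k + 1) • (Lmap (g 2) - Lmap (g 1)) :=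
    ((continuous_lamR0 lam g cst hlam).pow _).smul continuous_const
  by_cases hc : cfun lam k x₀ = 0
  · have hbound : ∀ x : Vec2, ‖cfun lam k x • (Lmap (g 0) - LminSel lam g x)‖
        ≤ |cfun lam k x| * (‖Lmap (g 0) - Lmap (g 1)‖ + ‖Lmap (g 0) - Lmap (g 2)‖) := by
      intro x
      rw [norm_smul (cfun lam k x) (Lmap (g 0) - LminSel lam g x), Real.norm_eq_abs]
      apply mul_le_mul_of_nonneg_left _ (abs_nonneg _)
      unfold LminSel
      split_ifs
      · linarith [norm_nonneg (Lmap (g 0) - Lmap (g 2))]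
      · linarith [norm_nonneg (Lmap (g 0) - Lmap (g 1))]
      · rw [sub_self]
        simp only [norm_zero]
        positivity
    have ht1 : Filter.Tendsto (fun x => cfun lam k x • (Lmap (g 0) - LminSel lam g x))
        (nhds x₀) (nhds 0) := by
      apply squeeze_zero_norm hbound
      have hcont : Continuous fun x => |cfun lam k x|
          * (‖Lmap (g 0) - Lmap (g 1)‖ + ‖Lmap (g 0) - Lmap (g 2)‖) :=
        (continuous_cfun lam g cst k hlam).abs.mul continuous_const
      have := hcont.tendsto x₀
      simpa [hc] using this
    have ht2 := hc2.tendsto x₀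
    have hsum : Dfun lam g k = fun x => cfun lam k x • (Lmap (g 0) - LminSel lam g x)
        + lamR lam 0 x ^ (k + 1) • (Lmap (g 2) - Lmap (g 1)) := rfl
    have hDx : Dfun lam g k x₀
        = 0 + lamR lam 0 x₀ ^ (k + 1) • (Lmap (g 2) - Lmap (g 1)) := by
      rw [Dfun, hc]; simp
    unfold ContinuousAt
    rw [hDx, hsum]
    exact ht1.add ht2
  · have hw0 : lam 2 x₀ - lam 1 x₀ ≠ 0 := fun h => hc (by rw [cfun, h]; ring)
    have hR0 : lamR lam 0 x₀ ≠ 0 := by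
      intro h; apply hc; rw [cfun, h, zero_pow (by omega : k ≠ 0)]; ring
    have hRpos : 0 < lamR lam 0 x₀ := lt_of_le_of_ne (lamR_nonneg lam x₀) (Ne.symm hR0)
    have hminlt : min (lam 1 x₀) (lam 2 x₀) < lam 0 x₀ := by
      unfold lamR at hRpos
      rcases le_total (lam 0 x₀) (min (lam 1 x₀) (lam 2 x₀)) with h | h
      · rw [min_eq_left h] at hRpos; linarith
      · rw [min_eq_right h] at hRpos; linarith
    have h12 : lam 1 x₀ ≠ lam 2 x₀ := fun h => hw0 (by rw [h]; ring)
    rcases lt_or_gt_of_ne h12 with h12' | h21'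
    · have h10 : lam 1 x₀ < lam 0 x₀ := by
        rw [min_eq_left h12'.le] at hminlt; exact hminlt
      have hopen : IsOpen {x : Vec2 | lam 1 x < lam 0 x ∧ lam 1 x < lam 2 x} :=
        IsOpen.and (isOpen_lt (continuous_lam lam g cst hlam 1) (continuous_lam lam g cst hlam 0))
          (isOpen_lt (continuous_lam lam g cst hlam 1) (continuous_lam lam g cst hlam 2))
      have hmem : {x : Vec2 | lam 1 x < lam 0 x ∧ lam 1 x < lam 2 x} ∈ nhds x₀ :=
        hopen.mem_nhds ⟨h10, h12'⟩
      have hcont : Continuous fun x => cfun lam k x • (Lmap (g 0) - Lmap (g 1))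
          + lamR lam 0 x ^ (k + 1) • (Lmap (g 2) - Lmap (g 1)) :=
        (((continuous_cfun lam g cst k hlam).smul continuous_const)).add hc2
      apply ContinuousAt.congr (hcont.continuousAt)
      filter_upwards [hmem] with x hx
      rw [Dfun, LminSel, if_pos ⟨hx.1.le, hx.2.le⟩]
    · have h20 : lam 2 x₀ < lam 0 x₀ := by
        rw [min_eq_right h21'.le] at hminlt; exact hminlt
      have hopen : IsOpen {x : Vec2 | lam 2 x < lam 0 x ∧ lam 2 x < lam 1 x} :=
        IsOpen.and (isOpen_lt (continuous_lam lam g cst hlam 2) (continuous_lam lam g cst hlam 0))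
          (isOpen_lt (continuous_lam lam g cst hlam 2) (continuous_lam lam g cst hlam 1))
      have hmem : {x : Vec2 | lam 2 x < lam 0 x ∧ lam 2 x < lam 1 x} ∈ nhds x₀ :=
        hopen.mem_nhds ⟨h20, h21'⟩
      have hcont : Continuous fun x => cfun lam k x • (Lmap (g 0) - Lmap (g 2))
          + lamR lam 0 x ^ (k + 1) • (Lmap (g 2) - Lmap (g 1)) :=
        (((continuous_cfun lam g cst k hlam).smul continuous_const)).add hc2
      apply ContinuousAt.congr (hcont.continuousAt)
      filter_upwards [hmem] with x hx
      rw [Dfun, LminSel, if_neg, if_pos ⟨hx.1.le, hx.2.le⟩]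
      rintro ⟨-, hcon⟩
      exact absurd hcon (not_le.mpr hx.2)

end

section

variable (lam : Fin 3 → Vec2 → ℝ) (g : Fin 3 → Vec2) (cst : Fin 3 → ℝ) (area : ℝ) (k : ℕ)

def Dv1 (x : Vec2) : Vec2 →L[ℝ] ℝ :=
  (4 * area ^ 2 / 9 / ((k : ℝ) + 1)) • (Dfun lam g k x - Dp lam g k x)
    - (4 * area ^ 2 / 9) • Dq lam g k x

def Dv2 (x : Vec2) : Vec2 →L[ℝ] ℝ :=
  Dv1 lam g area k x + (2 * (4 * area ^ 2 / 9)) • Dq lam g k x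

variable (hlam : ∀ i x, lam i x = dot2 (g i) x + cst i)

include cst hlam

lemma hasFDerivAt_vE1 (hk : 2 ≤ k) (x : Vec2) :
    HasFDerivAt (vE1 lam area k 0) (Dv1 lam g area k x) x := by
  have hG := hasFDerivAt_G lam g cst k hlam hk x
  have hp := hasFDerivAt_p lam g cst k hlam x
  have hq := hasFDerivAt_q lam g cst k hlam (by omega) x
  have h := ((hG.sub hp).const_mul (4 * area ^ 2 / 9 / ((k : ℝ) + 1))).sub
    (hq.const_mul (4 * area ^ 2 / 9))
  refine HasFDerivAt.congr_of_eventuallyEq h (Filter.Eventually.of_forall fun y => ?_)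
  simp only [vE1, Gfun, Pi.sub_apply]
  norm_num
  ring

lemma hasFDerivAt_vE2 (hk : 2 ≤ k) (x : Vec2) :
    HasFDerivAt (vE2 lam area k 0) (Dv2 lam g area k x) x := by
  have h1 := hasFDerivAt_vE1 lam g cst area k hlam hk x
  have hq := hasFDerivAt_q lam g cst k hlam (by omega) x
  have h := h1.add (hq.const_mul (2 * (4 * area ^ 2 / 9)))
  refine HasFDerivAt.congr_of_eventuallyEq h (Filter.Eventually.of_forall fun y => ?_)
  simp only [vE1, vE2, Pi.add_apply]
  norm_num
  ring

lemma continuous_Dv1 (hk : 2 ≤ k) : Continuous (Dv1 lam g area k) := by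
  have hq : Continuous (Dq lam g k) := by
    unfold Dq
    refine Continuous.add (Continuous.add ?_ ?_) ?_
    · exact (((continuous_const.mul ((continuous_lam lam g cst hlam 0).pow _)).mul
        (continuous_lam lam g cst hlam 1)).mul (continuous_lam lam g cst hlam 2)).smul
        continuous_const
    · exact (((continuous_lam lam g cst hlam 0).pow _).mul
        (continuous_lam lam g cst hlam 2)).smul continuous_const
    · exact (((continuous_lam lam g cst hlam 0).pow _).mul
        (continuous_lam lam g cst hlam 1)).smul continuous_const
  have hp : Continuous (Dp lam g k) := by
    unfold Dp
    refine Continuous.add ?_ ?_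
    · exact ((continuous_const.mul ((continuous_lam lam g cst hlam 0).pow _)).mul
        ((continuous_lam lam g cst hlam 2).sub (continuous_lam lam g cst hlam 1))).smul
        continuous_const
    · exact ((continuous_lam lam g cst hlam 0).pow _).smul continuous_const
  have hD := continuous_Dfun lam g cst k hlam hk
  unfold Dv1
  exact ((hD.sub hp).const_smul (4 * area ^ 2 / 9 / ((k : ℝ) + 1))).sub (hq.const_smul (4 * area ^ 2 / 9))

lemma continuous_Dv2 (hk : 2 ≤ k) : Continuous (Dv2 lam g area k) := by
  have hq : Continuous (Dq lam g k) := by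
    unfold Dq
    refine Continuous.add (Continuous.add ?_ ?_) ?_
    · exact (((continuous_const.mul ((continuous_lam lam g cst hlam 0).pow _)).mul
        (continuous_lam lam g cst hlam 1)).mul (continuous_lam lam g cst hlam 2)).smul
        continuous_const
    · exact (((continuous_lam lam g cst hlam 0).pow _).mul
        (continuous_lam lam g cst hlam 2)).smul continuous_const
    · exact (((continuous_lam lam g cst hlam 0).pow _).mul
        (continuous_lam lam g cst hlam 1)).smul continuous_const
  unfold Dv2
  exact (continuous_Dv1 lam g cst area k hlam hk).add (hq.const_smul (2 * (4 * area ^ 2 / 9)))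

lemma contDiff_vE1 (hk : 2 ≤ k) : ContDiff ℝ 1 (vE1 lam area k 0) := by
  rw [contDiff_one_iff_fderiv]
  refine ⟨fun x => (hasFDerivAt_vE1 lam g cst area k hlam hk x).differentiableAt, ?_⟩
  have he : fderiv ℝ (vE1 lam area k 0) = Dv1 lam g area k :=
    funext fun x => (hasFDerivAt_vE1 lam g cst area k hlam hk x).fderiv
  rw [he]
  exact continuous_Dv1 lam g cst area k hlam hk

lemma contDiff_vE2 (hk : 2 ≤ k) : ContDiff ℝ 1 (vE2 lam area k 0) := by
  rw [contDiff_one_iff_fderiv]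
  refine ⟨fun x => (hasFDerivAt_vE2 lam g cst area k hlam hk x).differentiableAt, ?_⟩
  have he : fderiv ℝ (vE2 lam area k 0) = Dv2 lam g area k :=
    funext fun x => (hasFDerivAt_vE2 lam g cst area k hlam hk x).fderiv
  rw [he]
  exact continuous_Dv2 lam g cst area k hlam hk

end

section

variable (lam : Fin 3 → Vec2 → ℝ) (g : Fin 3 → Vec2) (area : ℝ) (k : ℕ)

lemma edge0_data (hk : 2 ≤ k) (x : Vec2) (h0 : lam 0 x = 0) (h1 : 0 ≤ lam 1 x)
    (h2 : 0 ≤ lam 2 x) : Dv1 lam g area k x = 0 ∧ Dv2 lam g area k x = 0 := by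
  have hmin : min (lam 0 x) (min (lam 1 x) (lam 2 x)) = 0 := by
    rw [h0]; exact min_eq_left (le_min h1 h2)
  have hR : lamR lam 0 x = 0 := by unfold lamR; rw [hmin, h0, sub_zero]
  have hk0 : k ≠ 0 := by omega
  have hk1 : k - 1 ≠ 0 := by omega
  have hq : Dq lam g k x = 0 := by
    simp [Dq, h0, zero_pow hk0, zero_pow hk1]
  have hd : Dfun lam g k x = 0 := by
    simp [Dfun, cfun, hR, zero_pow hk0, zero_pow (by omega : k + 1 ≠ 0)]
  have hp : Dp lam g k x = 0 := by
    simp [Dp, h0, zero_pow hk0, zero_pow (by omega : k + 1 ≠ 0)]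
  constructor
  · simp [Dv1, hq, hd, hp]
  · simp [Dv2, Dv1, hq, hd, hp]

lemma edge1_data (hk : 2 ≤ k) (x : Vec2) (h1 : lam 1 x = 0) (h0 : 0 ≤ lam 0 x)
    (h2 : 0 ≤ lam 2 x) :
    Dv1 lam g area k x = (-(2 * (4 * area ^ 2 / 9)) * lam 0 x ^ k * lam 2 x) • Lmap (g 1)
      ∧ Dv2 lam g area k x = 0 := by
  have hmin : min (lam 0 x) (min (lam 1 x) (lam 2 x)) = 0 := by
    rw [h1, min_eq_left h2, min_eq_right h0]
  have hR : lamR lam 0 x = lam 0 x := by unfold lamR; rw [hmin, sub_zero]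
  have hsel : LminSel lam g x = Lmap (g 1) := by
    rw [LminSel, if_pos ⟨by rw [h1]; exact h0, by rw [h1]; exact h2⟩]
  have hkne : ((k : ℝ) + 1) ≠ 0 := by positivity
  have hq1 : Dq lam g k x = (lam 0 x ^ k * lam 2 x) • Lmap (g 1) := by
    ext y
    simp only [Dq, h1, ContinuousLinearMap.add_apply, ContinuousLinearMap.smul_apply,
      smul_eq_mul]
    ring
  have hDv1 : Dv1 lam g area k x
      = (-(2 * (4 * area ^ 2 / 9)) * lam 0 x ^ k * lam 2 x) • Lmap (g 1) := by
    ext y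
    simp only [Dv1, Dfun, Dp, Dq, cfun, hR, hsel, h1, ContinuousLinearMap.add_apply,
      ContinuousLinearMap.sub_apply, ContinuousLinearMap.smul_apply, smul_eq_mul]
    field_simp
    ring
  refine ⟨hDv1, ?_⟩
  rw [Dv2, hDv1, hq1]
  ext y
  simp only [ContinuousLinearMap.add_apply, ContinuousLinearMap.smul_apply,
    ContinuousLinearMap.zero_apply, smul_eq_mul]
  ring

lemma edge2_data (hk : 2 ≤ k) (x : Vec2) (h2 : lam 2 x = 0) (h0 : 0 ≤ lam 0 x)
    (h1 : 0 ≤ lam 1 x) :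
    Dv1 lam g area k x = 0 ∧
      Dv2 lam g area k x = (2 * (4 * area ^ 2 / 9) * lam 0 x ^ k * lam 1 x) • Lmap (g 2) := by
  have hmin : min (lam 0 x) (min (lam 1 x) (lam 2 x)) = 0 := by
    rw [h2, min_eq_right h1, min_eq_right h0]
  have hR : lamR lam 0 x = lam 0 x := by unfold lamR; rw [hmin, sub_zero]
  have hkne : ((k : ℝ) + 1) ≠ 0 := by positivity
  have hq2 : Dq lam g k x = (lam 0 x ^ k * lam 1 x) • Lmap (g 2) := by
    ext y
    simp only [Dq, h2, ContinuousLinearMap.add_apply, ContinuousLinearMap.smul_apply,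
      smul_eq_mul]
    ring
  have hDv1 : Dv1 lam g area k x = 0 := by
    rcases le_or_gt (lam 1 x) 0 with hle | hlt
    · have h10 : lam 1 x = 0 := le_antisymm hle h1
      ext y
      simp only [Dv1, Dfun, Dp, Dq, cfun, hR, h2, h10, ContinuousLinearMap.add_apply,
        ContinuousLinearMap.sub_apply, ContinuousLinearMap.smul_apply,
        ContinuousLinearMap.zero_apply, smul_eq_mul]
      field_simp
      ring
    · have hsel : LminSel lam g x = Lmap (g 2) := by
        rw [LminSel, if_neg, if_pos ⟨by rw [h2]; exact h0, by rw [h2]; exact h1⟩]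
        rintro ⟨-, hcon⟩
        rw [h2] at hcon
        exact absurd hcon (not_le.mpr hlt)
      ext y
      simp only [Dv1, Dfun, Dp, Dq, cfun, hR, hsel, h2, ContinuousLinearMap.add_apply,
        ContinuousLinearMap.sub_apply, ContinuousLinearMap.smul_apply,
        ContinuousLinearMap.zero_apply, smul_eq_mul]
      field_simp
      ring
  refine ⟨hDv1, ?_⟩
  rw [Dv2, hDv1, hq2]
  ext y
  simp only [ContinuousLinearMap.add_apply, ContinuousLinearMap.smul_apply,
    ContinuousLinearMap.zero_apply, smul_eq_mul, zero_add]
  ring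

lemma vE_vals (x : Vec2) (hmin : min (lam 0 x) (min (lam 1 x) (lam 2 x)) = 0)
    (hprod : lam 0 x ^ k * lam 1 x * lam 2 x = 0) :
    vE1 lam area k 0 x = 0 ∧ vE2 lam area k 0 x = 0 := by
  have hR : lamR lam 0 x = lam 0 x := by unfold lamR; rw [hmin, sub_zero]
  have h : 4 * area ^ 2 / 9 * lam 0 x ^ k * lam 1 x * lam 2 x = 0 := by
    linear_combination (4 * area ^ 2 / 9) * hprod
  constructor
  · simp [vE1, hR, h]
  · simp [vE2, hR, h]

end

end EdgeAux

/-- trace and normal-derivative properties of the edge enrichment functions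
`v_{0,1}` and `v_{0,2}` for `k ≥ 2`. -/
theorem edge_enrichment_traces
    (v : Fin 3 → Vec2) (hv : AffineIndependent ℝ v)
    (lam : Fin 3 → Vec2 → ℝ) (g : Fin 3 → Vec2) (cst : Fin 3 → ℝ)
    (hlam : ∀ i x, lam i x = dot2 (g i) x + cst i)
    (hdelta : ∀ i j, lam i (v j) = if i = j then 1 else 0)
    (area : ℝ) (harea : area = |detT v| / 2)
    (n : Fin 3 → Vec2) (hn1 : ∀ j, dot2 (n j) (n j) = 1)
    (hn2 : ∀ j, dot2 (n j) (v (j + 2) - v (j + 1)) = 0)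
    (k : ℕ) (hk : 2 ≤ k) :
    ContDiff ℝ 1 (vE1 lam area k 0) ∧
    ContDiff ℝ 1 (vE2 lam area k 0) ∧
    (∀ j : Fin 3, ∀ x ∈ edgeSeg v j, vE1 lam area k 0 x = 0 ∧ vE2 lam area k 0 x = 0) ∧
    (∀ i : Fin 3, fderiv ℝ (vE1 lam area k 0) (v i) = 0 ∧
      fderiv ℝ (vE2 lam area k 0) (v i) = 0) ∧
    (∀ x ∈ edgeSeg v 1, fderiv ℝ (vE1 lam area k 0) x (n 1)
        = -(8 * area ^ 2 / 9) * dot2 (g 1) (n 1) * (lam 0 x) ^ k * lam 2 x) ∧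
    (∀ x ∈ edgeSeg v 0, fderiv ℝ (vE1 lam area k 0) x (n 0) = 0) ∧
    (∀ x ∈ edgeSeg v 2, fderiv ℝ (vE1 lam area k 0) x (n 2) = 0) ∧
    (∀ x ∈ edgeSeg v 2, fderiv ℝ (vE2 lam area k 0) x (n 2)
        = 8 * area ^ 2 / 9 * dot2 (g 2) (n 2) * (lam 0 x) ^ k * lam 1 x) ∧
    (∀ x ∈ edgeSeg v 0, fderiv ℝ (vE2 lam area k 0) x (n 0) = 0) ∧
    (∀ x ∈ edgeSeg v 1, fderiv ℝ (vE2 lam area k 0) x (n 1) = 0) := by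
  have hfd1 : ∀ x, fderiv ℝ (vE1 lam area k 0) x = EdgeAux.Dv1 lam g area k x :=
    fun x => (EdgeAux.hasFDerivAt_vE1 lam g cst area k hlam hk x).fderiv
  have hfd2 : ∀ x, fderiv ℝ (vE2 lam area k 0) x = EdgeAux.Dv2 lam g area k x :=
    fun x => (EdgeAux.hasFDerivAt_vE2 lam g cst area k hlam hk x).fderiv
  have hedge : ∀ j : Fin 3, ∀ x ∈ edgeSeg v j,
      lam j x = 0 ∧ 0 ≤ lam (j + 1) x ∧ 0 ≤ lam (j + 2) x := by
    intro j x hx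
    obtain ⟨a, b, ha, hb, hab, rfl⟩ := hx
    have key : ∀ i : Fin 3, lam i (a • v (j + 1) + b • v (j + 2))
        = a * lam i (v (j + 1)) + b * lam i (v (j + 2)) := by
      intro i
      rw [hlam, hlam, hlam]
      unfold dot2
      have e0 : (a • v (j + 1) + b • v (j + 2)) 0 = a * v (j + 1) 0 + b * v (j + 2) 0 := rfl
      have e1 : (a • v (j + 1) + b • v (j + 2)) 1 = a * v (j + 1) 1 + b * v (j + 2) 1 := rfl
      rw [e0, e1]
      linear_combination (- cst i) * hab
    refine ⟨?_, ?_, ?_⟩ <;> rw [key] <;> rw [hdelta, hdelta] <;>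
      fin_cases j <;> simp <;> try linarith
  have hedge0 : ∀ x ∈ edgeSeg v 0, lam 0 x = 0 ∧ 0 ≤ lam 1 x ∧ 0 ≤ lam 2 x := by
    intro x hx; have := hedge 0 x hx; simpa using this
  have hedge1 : ∀ x ∈ edgeSeg v 1, lam 1 x = 0 ∧ 0 ≤ lam 2 x ∧ 0 ≤ lam 0 x := by
    intro x hx; have := hedge 1 x hx; simpa using this
  have hedge2 : ∀ x ∈ edgeSeg v 2, lam 2 x = 0 ∧ 0 ≤ lam 0 x ∧ 0 ≤ lam 1 x := by
    intro x hx; have := hedge 2 x hx; simpa using this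
  have hk0 : k ≠ 0 := by omega
  refine ⟨EdgeAux.contDiff_vE1 lam g cst area k hlam hk,
    EdgeAux.contDiff_vE2 lam g cst area k hlam hk, ?_, ?_, ?_, ?_, ?_, ?_, ?_, ?_⟩
  · -- values vanish on edges
    intro j x hx
    fin_cases j
    · obtain ⟨h0, h1, h2⟩ := hedge0 x hx
      refine EdgeAux.vE_vals lam area k x ?_ ?_
      · rw [h0]; exact min_eq_left (le_min h1 h2)
      · rw [h0, zero_pow hk0]; ring
    · obtain ⟨h1, h2, h0⟩ := hedge1 x hx
      refine EdgeAux.vE_vals lam area k x ?_ ?_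
      · rw [h1, min_eq_left h2, min_eq_right h0]
      · rw [h1]; ring
    · obtain ⟨h2, h0, h1⟩ := hedge2 x hx
      refine EdgeAux.vE_vals lam area k x ?_ ?_
      · rw [h2, min_eq_right h1, min_eq_right h0]
      · rw [h2]; ring
  · -- derivative vanishes at vertices
    intro i
    fin_cases i
    · have h1 : lam 1 (v 0) = 0 := by simp [hdelta]
      have h2 : lam 2 (v 0) = 0 := by simp [hdelta]
      have hd := EdgeAux.edge1_data lam g area k hk (v 0) h1 (by simp [hdelta]) (by simp [hdelta])
      refine ⟨?_, ?_⟩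
      · show fderiv ℝ (vE1 lam area k 0) (v 0) = 0
        rw [hfd1, hd.1, h2]; simp
      · show fderiv ℝ (vE2 lam area k 0) (v 0) = 0
        rw [hfd2, hd.2]
    · have h0 : lam 0 (v 1) = 0 := by simp [hdelta]
      have hd := EdgeAux.edge0_data lam g area k hk (v 1) h0 (by simp [hdelta]) (by simp [hdelta])
      refine ⟨?_, ?_⟩
      · show fderiv ℝ (vE1 lam area k 0) (v 1) = 0
        rw [hfd1, hd.1]
      · show fderiv ℝ (vE2 lam area k 0) (v 1) = 0
        rw [hfd2, hd.2]
    · have h0 : lam 0 (v 2) = 0 := by simp [hdelta]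
      have hd := EdgeAux.edge0_data lam g area k hk (v 2) h0 (by simp [hdelta]) (by simp [hdelta])
      refine ⟨?_, ?_⟩
      · show fderiv ℝ (vE1 lam area k 0) (v 2) = 0
        rw [hfd1, hd.1]
      · show fderiv ℝ (vE2 lam area k 0) (v 2) = 0
        rw [hfd2, hd.2]
  · -- vE1 normal derivative on e1
    intro x hx
    obtain ⟨h1, h2, h0⟩ := hedge1 x hx
    have hd := EdgeAux.edge1_data lam g area k hk x h1 h0 h2
    rw [hfd1, hd.1]
    simp only [ContinuousLinearMap.smul_apply, EdgeAux.Lmap_apply, smul_eq_mul]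
    ring
  · -- vE1 derivative vanishes on e0
    intro x hx
    obtain ⟨h0, h1, h2⟩ := hedge0 x hx
    have hd := EdgeAux.edge0_data lam g area k hk x h0 h1 h2
    rw [hfd1, hd.1]
    simp
  · -- vE1 derivative vanishes on e2
    intro x hx
    obtain ⟨h2, h0, h1⟩ := hedge2 x hx
    have hd := EdgeAux.edge2_data lam g area k hk x h2 h0 h1
    rw [hfd1, hd.1]
    simp
  · -- vE2 normal derivative on e2
    intro x hx
    obtain ⟨h2, h0, h1⟩ := hedge2 x hx
    have hd := EdgeAux.edge2_data lam g area k hk x h2 h0 h1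
    rw [hfd2, hd.2]
    simp only [ContinuousLinearMap.smul_apply, EdgeAux.Lmap_apply, smul_eq_mul]
    ring
  · -- vE2 derivative vanishes on e0
    intro x hx
    obtain ⟨h0, h1, h2⟩ := hedge0 x hx
    have hd := EdgeAux.edge0_data lam g area k hk x h0 h1 h2
    rw [hfd2, hd.2]
    simp
  · -- vE2 derivative vanishes on e1
    intro x hx
    obtain ⟨h1, h2, h0⟩ := hedge1 x hx
    have hd := EdgeAux.edge1_data lam g area k hk x h1 h0 h2
    rw [hfd2, hd.2]
    simp
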